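/- Every undirected Fitch graph is a complete multipartite graph. -/

import Mathlib

open SimpleGraph

/-- A leaf of a graph is a vertex with exactly one neighbour (i.e. a vertex of degree 1). -/
def SimpleGraph.IsLeaf {V : Type*} (T : SimpleGraph V) (v : V) : Prop :=
  ∃! u, T.Adj v u

/-- The undirected Fitch graph explained by an edge-labelled tree `(T, lam)`
(labels: `true` = 1, `false` = 0): its vertices are the leaves of `T`, and two
distinct leaves are adjacent iff the (unique) path between them in `T` contains
at least one edge labelled `1`. -/
def fitchGraph {V : Type*} (T : SimpleGraph V) (lam : Sym2 V → Bool) :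
    SimpleGraph {v : V // T.IsLeaf v} where
  Adj x y := x ≠ y ∧ ∃ p : T.Walk x.1 y.1, p.IsPath ∧ ∃ e ∈ p.edges, lam e = true
  symm := by
    constructor
    rintro x y ⟨hxy, p, hp, e, he, hl⟩
    exact ⟨hxy.symm, p.reverse, hp.reverse, e, by
      rw [SimpleGraph.Walk.edges_reverse]; exact List.mem_reverse.mpr he, hl⟩
  loopless := by constructor; rintro x ⟨hx, -⟩; exact hx rfl

/-- A graph is an undirected Fitch graph if it is isomorphic to the Fitch graph
explained by some edge-labelled finite tree. -/
def IsFitchGraph {W : Type*} (G : SimpleGraph W) : Prop :=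
  ∃ (V : Type) (T : SimpleGraph V) (lam : Sym2 V → Bool),
    Finite V ∧ T.IsTree ∧ Nonempty (G ≃g fitchGraph T lam)

/-- A graph is complete multipartite if its vertex set can be partitioned into
nonempty independent parts such that two vertices are adjacent iff they lie in
different parts. -/
def IsCompleteMultipartite' {W : Type*} (G : SimpleGraph W) : Prop :=
  ∃ P : Set (Set W), (∀ p ∈ P, p.Nonempty) ∧ (∀ x : W, ∃! p, p ∈ P ∧ x ∈ p) ∧
    ∀ x y : W, G.Adj x y ↔ ∃ p ∈ P, ∃ q ∈ P, p ≠ q ∧ x ∈ p ∧ y ∈ q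

/-- In the Fitch graph of a tree, non-adjacency is transitive. -/
lemma fitch_nonadj_trans {V : Type} (T : SimpleGraph V) (lam : Sym2 V → Bool)
    (hT : T.IsTree) {x y z : {v : V // T.IsLeaf v}}
    (hxy : ¬ (fitchGraph T lam).Adj x y) (hyz : ¬ (fitchGraph T lam).Adj y z) :
    ¬ (fitchGraph T lam).Adj x z := by
  classical
  rintro ⟨hxz, p, hp, e, he, hl⟩
  by_cases h1 : x = y
  · subst h1; exact hyz ⟨hxz, p, hp, e, he, hl⟩
  by_cases h2 : y = z
  · subst h2; exact hxy ⟨h1, p, hp, e, he, hl⟩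
  obtain ⟨pxy, hpxy, -⟩ := hT.existsUnique_path x.1 y.1
  obtain ⟨pyz, hpyz, -⟩ := hT.existsUnique_path y.1 z.1
  have hpeq : p = (pxy.append pyz).bypass :=
    (hT.existsUnique_path x.1 z.1).unique hp (SimpleGraph.Walk.bypass_isPath _)
  have he' : e ∈ (pxy.append pyz).edges :=
    SimpleGraph.Walk.edges_bypass_subset _ (hpeq ▸ he)
  rw [SimpleGraph.Walk.edges_append, List.mem_append] at he'
  rcases he' with he' | he'
  · exact hxy ⟨h1, pxy, hpxy, e, he', hl⟩
  · exact hyz ⟨h2, pyz, hpyz, e, he', hl⟩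

/-- every undirected Fitch graph is a complete multipartite graph. -/
theorem fitch_isCompleteMultipartite {W : Type*} (G : SimpleGraph W)
    (hG : IsFitchGraph G) : IsCompleteMultipartite' G := by
  obtain ⟨V, T, lam, hfin, hT, ⟨f⟩⟩ := hG
  set S : W → W → Prop := fun a b => a = b ∨ ¬ G.Adj a b with hS
  have hsymm : ∀ a b, S a b → S b a := by
    rintro a b (rfl | h)
    · exact Or.inl rfl
    · exact Or.inr fun h' => h h'.symm
  have htrans : ∀ a b c, S a b → S b c → S a c := by
    rintro a b c (rfl | hab) hbc
    · exact hbc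
    rcases hbc with rfl | hbc
    · exact Or.inr hab
    refine Or.inr fun hac => ?_
    have hab' : ¬ (fitchGraph T lam).Adj (f a) (f b) :=
      fun h => hab (f.map_adj_iff.mp h)
    have hbc' : ¬ (fitchGraph T lam).Adj (f b) (f c) :=
      fun h => hbc (f.map_adj_iff.mp h)
    exact fitch_nonadj_trans T lam hT hab' hbc' (f.map_adj_iff.mpr hac)
  refine ⟨{s | ∃ x, s = {y | S x y}}, ?_, ?_, ?_⟩
  · rintro p ⟨x, rfl⟩; exact ⟨x, Or.inl rfl⟩
  · intro x
    refine ⟨{y | S x y}, ⟨⟨x, rfl⟩, Or.inl rfl⟩, ?_⟩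
    rintro p ⟨⟨w, rfl⟩, hx⟩
    ext y
    simp only [Set.mem_setOf_eq]
    exact ⟨fun h => htrans x w y (hsymm w x hx) h, fun h => htrans w x y hx h⟩
  · intro x y
    constructor
    · intro hxy
      refine ⟨{y' | S x y'}, ⟨x, rfl⟩, {y' | S y y'}, ⟨y, rfl⟩, ?_, Or.inl rfl, Or.inl rfl⟩
      intro h
      have hy : y ∈ {y' | S x y'} := h.symm ▸ (Or.inl rfl : S y y)
      rcases hy with rfl | h'
      · exact G.loopless.irrefl _ hxy
      · exact h' hxy
    · rintro ⟨p, ⟨a, rfl⟩, q, ⟨b, rfl⟩, hpq, hx, hy⟩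
      by_contra h
      have hSxy : S x y := Or.inr h
      apply hpq
      have hax : S a x := hx
      have hby : S b y := hy
      have hab : S a b := htrans a x b hax (htrans x y b hSxy (hsymm b y hby))
      ext z
      simp only [Set.mem_setOf_eq]
      exact ⟨fun hz => htrans b a z (hsymm a b hab) hz, fun hz => htrans a b z hab hz⟩
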